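/- arXiv:1405.7874 — 2 statements merged into one kernel-verified Lean document; each statement's English description precedes it below -/
import Mathlib

section
/- In an irreducible CIS graph with clique number t, no two cliques of size t intersect in a set of size t−1. -/
open SimpleGraph

variable {V : Type*}

/-- A set of vertices is stable (independent) if no two of its vertices are adjacent. -/
def SimpleGraph.IsStableSet (G : SimpleGraph V) (s : Set V) : Prop :=
  s.Pairwise fun u v => ¬ G.Adj u v

/-- A graph is CIS if every maximal clique and every maximal stable set intersect. -/
def SimpleGraph.IsCIS (G : SimpleGraph V) : Prop :=
  ∀ C S : Set V, Maximal G.IsClique C → Maximal G.IsStableSet S → (C ∩ S).Nonempty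

/-- A graph is irreducible if no two distinct vertices have the same open neighborhood. -/
def SimpleGraph.Irreducible (G : SimpleGraph V) : Prop :=
  ∀ u v : V, G.neighborSet u = G.neighborSet v → u = v

/-- Every stable set extends to a maximal stable set (Zorn). -/
lemma exists_maximal_stable (G : SimpleGraph V) (s : Set V) (hs : G.IsStableSet s) :
    ∃ S, s ⊆ S ∧ Maximal G.IsStableSet S := by
  have h := zorn_subset_nonempty {T : Set V | G.IsStableSet T} ?_ s hs
  · obtain ⟨m, hsm, hm⟩ := h
    exact ⟨m, hsm, hm⟩
  · intro c hc hchain _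
    refine ⟨⋃₀ c, ?_, fun t ht => Set.subset_sUnion_of_mem ht⟩
    intro u hu v hv huv
    obtain ⟨T₁, hT₁, huT₁⟩ := hu
    obtain ⟨T₂, hT₂, hvT₂⟩ := hv
    rcases hchain.total hT₁ hT₂ with h | h
    · exact hc hT₂ (h huT₁) hvT₂ huv
    · exact hc hT₁ huT₁ (h hvT₂) huv

/-- A clique of maximum size is a maximal clique. -/
lemma max_card_clique_maximal [Fintype V] [DecidableEq V] {G : SimpleGraph V} {t : ℕ}
    {C : Finset V} (hω : G.cliqueNum = t) (h : G.IsNClique t C) :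
    Maximal G.IsClique (↑C : Set V) := by
  refine ⟨h.isClique, fun T hT hsub => ?_⟩
  have hTfin : T.Finite := Set.toFinite T
  have hcard : hTfin.toFinset.card ≤ t := by
    rw [← hω]
    exact IsClique.card_le_cliqueNum (tc := by simpa using hT)
  have hCT : C ⊆ hTfin.toFinset := fun w hw => by simpa using hsub hw
  have heq : hTfin.toFinset = C :=
    (Finset.eq_of_subset_of_card_le hCT (by rw [h.card_eq]; exact hcard)).symm
  intro w hw
  have hw' : w ∈ hTfin.toFinset := by simpa using hw
  rw [heq] at hw'
  exact hw'

lemma key_lemma [Fintype V] {G : SimpleGraph V} (hcis : G.IsCIS)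
    (C₁ C₂ : Finset V) (x y z : V)
    (hmax : Maximal G.IsClique (↑C₁ : Set V)) (hx : x ∈ C₁) (hyC₁ : y ∉ C₁)
    (hy : y ∈ C₂) (hsub : ∀ w ∈ C₁, w ≠ x → w ∈ C₂) (h₂ : G.IsClique (↑C₂ : Set V))
    (hzx : G.Adj z x) (hzy : ¬ G.Adj z y) : False := by
  have hzney : z ≠ y := by
    rintro rfl
    -- then y is adjacent to everything in C₁, contradicting maximality
    have hclique : G.IsClique (insert z (↑C₁ : Set V)) := by
      apply hmax.prop.insert
      intro w hw hwy
      rcases eq_or_ne w x with rfl | hwx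
      · exact hzx
      · exact h₂ hy (hsub w hw hwx) hwy
    have : z ∈ (↑C₁ : Set V) :=
      hmax.2 hclique (Set.subset_insert _ _) (Set.mem_insert _ _)
    exact hyC₁ this
  have hstable : G.IsStableSet {y, z} := by
    intro u hu v hv huv
    simp only [Set.mem_insert_iff, Set.mem_singleton_iff] at hu hv
    rcases hu with rfl | rfl <;> rcases hv with rfl | rfl
    · exact absurd rfl huv
    · exact fun h => hzy h.symm
    · exact hzy
    · exact absurd rfl huv
  obtain ⟨S, hsS, hSmax⟩ := exists_maximal_stable G {y, z} hstable
  obtain ⟨w, hwC, hwS⟩ := hcis (↑C₁) S hmax hSmax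
  have hyS : y ∈ S := hsS (Set.mem_insert _ _)
  have hzS : z ∈ S := hsS (by simp)
  rcases eq_or_ne w x with rfl | hwx
  · exact hSmax.prop hzS hwS (G.ne_of_adj hzx) hzx
  · have hwC₂ : w ∈ C₂ := hsub w hwC hwx
    have hwy : w ≠ y := fun h => hyC₁ (h ▸ hwC)
    exact hSmax.prop hwS hyS hwy (h₂ hwC₂ hy hwy)

theorem no_two_max_cliques_meet_in_large_set (G : SimpleGraph V) [Fintype V]
    (hirr : G.Irreducible) (hcis : G.IsCIS) (t : ℕ) (hω : G.cliqueNum = t)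
    (C₁ C₂ : Finset V) (h₁ : G.IsNClique t C₁) (h₂ : G.IsNClique t C₂)
    (hne : C₁ ≠ C₂) [DecidableEq V] :
    (C₁ ∩ C₂).card ≠ t - 1 := by
  intro hcard
  have e1 := h₁.card_eq
  have e2 := h₂.card_eq
  have ht0 : t ≠ 0 := by
    rintro rfl
    exact hne ((Finset.card_eq_zero.mp e1).trans (Finset.card_eq_zero.mp e2).symm)
  have hd1 : (C₁ \ C₂).card = 1 := by
    have h := Finset.card_inter_add_card_sdiff C₁ C₂
    omega
  have hd2 : (C₂ \ C₁).card = 1 := by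
    have h := Finset.card_inter_add_card_sdiff C₂ C₁
    rw [Finset.inter_comm] at h
    omega
  obtain ⟨x, hxeq⟩ := Finset.card_eq_one.mp hd1
  obtain ⟨y, hyeq⟩ := Finset.card_eq_one.mp hd2
  have hx1 : x ∈ C₁ ∧ x ∉ C₂ :=
    Finset.mem_sdiff.mp (hxeq ▸ Finset.mem_singleton_self x)
  have hy1 : y ∈ C₂ ∧ y ∉ C₁ :=
    Finset.mem_sdiff.mp (hyeq ▸ Finset.mem_singleton_self y)
  have hsub1 : ∀ w ∈ C₁, w ≠ x → w ∈ C₂ := by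
    intro w hw hwx
    by_contra hwc
    have h : w ∈ C₁ \ C₂ := Finset.mem_sdiff.mpr ⟨hw, hwc⟩
    rw [hxeq] at h
    exact hwx (Finset.mem_singleton.mp h)
  have hsub2 : ∀ w ∈ C₂, w ≠ y → w ∈ C₁ := by
    intro w hw hwy
    by_contra hwc
    have h : w ∈ C₂ \ C₁ := Finset.mem_sdiff.mpr ⟨hw, hwc⟩
    rw [hyeq] at h
    exact hwy (Finset.mem_singleton.mp h)
  have hxy : x ≠ y := fun h => hx1.2 (h ▸ hy1.1)
  have hz : ∃ z, ¬(G.Adj x z ↔ G.Adj y z) := by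
    by_contra h
    push_neg at h
    exact hxy (hirr x y (Set.ext fun z => by
      simp only [mem_neighborSet]
      exact h z))
  obtain ⟨z, hz⟩ := hz
  by_cases hzx : G.Adj x z
  · have hzy : ¬ G.Adj y z := fun h => hz ⟨fun _ => h, fun _ => hzx⟩
    exact key_lemma hcis C₁ C₂ x y z (max_card_clique_maximal hω h₁) hx1.1 hy1.2
      hy1.1 hsub1 h₂.isClique hzx.symm (fun h => hzy h.symm)
  · have hzy : G.Adj y z := by
      by_contra h
      exact hz ⟨fun a => absurd a hzx, fun a => absurd a h⟩
    exact key_lemma hcis C₂ C₁ y x z (max_card_clique_maximal hω h₂) hy1.1 hx1.2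
      hx1.1 hsub2 h₁.isClique hzy.symm (fun h => hzx h.symm)
end

section
/- If Γ is a CIS graph and (a, b, c, d) is an induced path of length three in Γ, then there exists a vertex of Γ adjacent to both midpoints b and c and adjacent to neither endpoint a nor d. -/
open SimpleGraph

variable {V : Type*}

lemma exists_maximal_pairwise {P : V → V → Prop} (s : Set V) (hs : s.Pairwise P) :
    ∃ m, s ⊆ m ∧ Maximal (fun t => Set.Pairwise t P) m := by
  obtain ⟨m, hm, hmax⟩ := zorn_subset_nonempty {t : Set V | t.Pairwise P}
    (fun c hc hchain _ => by
      refine ⟨⋃₀ c, ?_, fun t ht => Set.subset_sUnion_of_mem ht⟩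
      intro u hu v hv huv
      obtain ⟨su, hsu, hu⟩ := hu
      obtain ⟨sv, hsv, hv⟩ := hv
      rcases hchain.total hsu hsv with h | h
      · exact hc hsv (h hu) hv huv
      · exact hc hsu hu (h hv) huv) s hs
  exact ⟨m, hm, hmax⟩

theorem cis_induced_path (G : SimpleGraph V) (hcis : G.IsCIS) (a b c d : V)
    (hab : G.Adj a b) (hbc : G.Adj b c) (hcd : G.Adj c d)
    (hac : ¬ G.Adj a c) (had : ¬ G.Adj a d) (hbd : ¬ G.Adj b d)
    (hadne : a ≠ d) :
    ∃ v : V, G.Adj v b ∧ G.Adj v c ∧ ¬ G.Adj v a ∧ ¬ G.Adj v d := by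
  have hCcl : G.IsClique {b, c} := by
    intro u hu v hv huv
    rcases hu with rfl | rfl <;> rcases hv with rfl | rfl <;> simp_all [G.adj_symm hbc]
  have hSst : G.IsStableSet {a, d} := by
    intro u hu v hv huv
    rcases hu with rfl | rfl <;> rcases hv with rfl | rfl
    · exact absurd rfl huv
    · exact had
    · exact fun h => had (G.adj_symm h)
    · exact absurd rfl huv
  obtain ⟨C, hCsub, hCmax⟩ := exists_maximal_pairwise {b, c} hCcl
  obtain ⟨S, hSsub, hSmax⟩ := exists_maximal_pairwise {a, d} hSst
  obtain ⟨v, hvC, hvS⟩ := hcis C S hCmax hSmax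
  have hvb : v ≠ b := by
    rintro rfl
    exact hSmax.prop hvS (hSsub (by simp)) (G.ne_of_adj hab).symm (G.adj_symm hab)
  have hvc : v ≠ c := by
    rintro rfl
    exact hSmax.prop hvS (hSsub (by simp [hadne])) (G.ne_of_adj hcd) hcd
  refine ⟨v, hCmax.prop hvC (hCsub (by simp)) hvb,
    hCmax.prop hvC (hCsub (by simp)) hvc, ?_, ?_⟩
  · intro h
    exact hSmax.prop hvS (hSsub (by simp)) (G.ne_of_adj h) h
  · intro h
    exact hSmax.prop hvS (hSsub (by simp)) (G.ne_of_adj h) h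
end
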